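/- Let n be a natural number and let G be a simple graph on 2n−1 vertices having exactly n vertices of degree n−1 and exactly n−1 vertices of degree n, such that G is not isomorphic to the complete bipartite graph K_{n,n−1}. Then G is traceable, i.e., G contains a Hamiltonian path. -/

import Mathlib

open SimpleGraph

section Ore

variable {V : Type} [Fintype V] [DecidableEq V] {G : SimpleGraph V} [DecidableRel G.Adj]

/-- From a nonempty chain list, build a walk with that support. -/
lemma walk_of_chain : ∀ (l : List V), l ≠ [] → l.Chain' G.Adj →
    ∃ (u w : V) (p : G.Walk u w), p.support = l
  | [], h, _ => absurd rfl h
  | [a], _, _ => ⟨a, a, Walk.nil, rfl⟩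
  | a :: b :: t, _, hch => by
    obtain ⟨hab, hch'⟩ := List.isChain_cons_cons.1 hch
    obtain ⟨u, w, p, hp⟩ := walk_of_chain (b :: t) (List.cons_ne_nil _ _) hch'
    have hu : u = b := by
      have := p.support_eq_cons
      rw [hp] at this
      exact (List.cons.injEq _ _ _ _ ▸ this).1.symm
    subst hu
    exact ⟨a, w, Walk.cons hab p, by simp [hp]⟩

/-- If there is no edge leaving the vertex set of `C`, Ore's condition fails. -/
lemma exists_edge_out
    (hOre : ∀ u v : V, u ≠ v → ¬G.Adj u v → Fintype.card V ≤ G.degree u + G.degree v + 1)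
    (C : List V) (hne : C ≠ []) (hnd : C.Nodup) (hlt : C.length < Fintype.card V) :
    ∃ y ∈ C, ∃ x, x ∉ C ∧ G.Adj y x := by
  by_contra hcon
  push_neg at hcon
  -- pick x outside C
  have hsub : C.toFinset ⊂ Finset.univ := by
    refine Finset.ssubset_univ_iff.2 ?_
    intro h
    have := Finset.card_univ (α := V)
    rw [← h, List.card_toFinset, hnd.dedup] at this
    omega
  obtain ⟨x, -, hx⟩ := Finset.exists_of_ssubset hsub
  rw [List.mem_toFinset] at hx
  set u0 := C.head hne with hu0
  have hu0C : u0 ∈ C := List.head_mem hne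
  have hxu : x ≠ u0 := fun h => hx (h ▸ hu0C)
  have hnadj : ¬G.Adj x u0 := fun h => hcon u0 hu0C x hx h.symm
  have h1 : G.degree u0 ≤ C.length - 1 := by
    have : G.neighborFinset u0 ⊆ C.toFinset.erase u0 := by
      intro z hz
      simp only [mem_neighborFinset] at hz
      refine Finset.mem_erase.2 ⟨fun h => G.irrefl (h ▸ hz), List.mem_toFinset.2 ?_⟩
      by_contra hzC
      exact hcon u0 hu0C z hzC hz
    calc G.degree u0 = (G.neighborFinset u0).card := rfl
      _ ≤ (C.toFinset.erase u0).card := Finset.card_le_card this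
      _ ≤ C.toFinset.card - 1 := by
          rw [Finset.card_erase_of_mem (List.mem_toFinset.2 hu0C)]
      _ = C.length - 1 := by rw [List.card_toFinset, hnd.dedup]
  have h2 : G.degree x ≤ Fintype.card V - C.length - 1 := by
    have : G.neighborFinset x ⊆ (Finset.univ \ C.toFinset).erase x := by
      intro z hz
      simp only [mem_neighborFinset] at hz
      refine Finset.mem_erase.2 ⟨fun h => G.irrefl (h ▸ hz), ?_⟩
      rw [Finset.mem_sdiff]
      refine ⟨Finset.mem_univ _, fun hzC => ?_⟩
      rw [List.mem_toFinset] at hzC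
      exact hcon z hzC x hx hz.symm
    calc G.degree x = (G.neighborFinset x).card := rfl
      _ ≤ ((Finset.univ \ C.toFinset).erase x).card := Finset.card_le_card this
      _ = (Finset.univ \ C.toFinset).card - 1 := by
          rw [Finset.card_erase_of_mem]
          rw [Finset.mem_sdiff]
          exact ⟨Finset.mem_univ _, fun h => hx (List.mem_toFinset.1 h)⟩
      _ = Fintype.card V - C.length - 1 := by
          rw [Finset.card_sdiff_of_subset (Finset.subset_univ _), Finset.card_univ,
            List.card_toFinset, hnd.dedup]
  have hlen : 1 ≤ C.length := List.length_pos_iff.2 hne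
  have := hOre x u0 hxu hnadj
  omega

/-- Rotating a closed chain keeps it a chain. -/
lemma chain'_rotate_of_closed (C1 C2 : List V) (y : V)
    (hch : (C1 ++ y :: C2).Chain' G.Adj)
    (hclosed : G.Adj ((C1 ++ y :: C2).getLast (by simp)) ((C1 ++ y :: C2).head (by simp))) :
    (y :: (C2 ++ C1)).Chain' G.Adj := by
  rcases List.eq_nil_or_concat C1 with h1 | ⟨C1', z, rfl⟩
  · subst h1; simpa using hch
  · -- C = C1' ++ [z] ++ y :: C2 ; rotated = y :: C2 ++ C1' ++ [z]
    simp only [List.concat_eq_append] at *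
    unfold List.Chain' at hch ⊢; rw [List.isChain_append] at hch
    obtain ⟨hchC1, hchy, hjoin⟩ := hch
    have hhead : ((C1' ++ [z]) ++ y :: C2).head (by simp) = (C1' ++ [z]).head (by simp) := by
      rw [List.head_append_of_ne_nil]
    have hlast : ((C1' ++ [z]) ++ y :: C2).getLast (by simp) = (y :: C2).getLast (by simp) := by
      rw [List.getLast_append_of_ne_nil _ (by simp)]
    rw [hhead, hlast] at hclosed
    rw [show y :: (C2 ++ (C1' ++ [z])) = (y :: C2) ++ (C1' ++ [z]) by simp]
    rw [List.isChain_append]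
    refine ⟨hchy, hchC1, ?_⟩
    intro a ha b hb
    rw [List.getLast?_eq_getLast_of_ne_nil (by simp), Option.mem_some_iff] at ha
    rw [List.head?_eq_head (by simp), Option.mem_some_iff] at hb
    subst ha; subst hb
    exact hclosed

/-- Given a closed chain (cycle) covering < all vertices, extend to a longer path. -/
lemma cycle_extend
    (hOre : ∀ u v : V, u ≠ v → ¬G.Adj u v → Fintype.card V ≤ G.degree u + G.degree v + 1)
    (C : List V) (hne : C ≠ []) (hnd : C.Nodup) (hch : C.Chain' G.Adj)
    (hclosed : G.Adj (C.getLast hne) (C.head hne))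
    (hlt : C.length < Fintype.card V) :
    ∃ l' : List V, l' ≠ [] ∧ l'.Nodup ∧ l'.Chain' G.Adj ∧ l'.length = C.length + 1 := by
  obtain ⟨y, hyC, x, hxC, hyx⟩ := exists_edge_out hOre C hne hnd hlt
  obtain ⟨C1, C2, rfl⟩ := List.append_of_mem hyC
  have hperm : (y :: (C2 ++ C1)).Perm (C1 ++ y :: C2) := by
    rw [show y :: (C2 ++ C1) = (y :: C2) ++ C1 from by simp]
    exact List.perm_append_comm
  refine ⟨x :: y :: (C2 ++ C1), by simp, ?_, ?_, by simp; omega⟩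
  · -- nodup
    rw [List.nodup_cons]
    exact ⟨fun h => hxC (hperm.mem_iff.1 h), hperm.nodup_iff.2 hnd⟩
  · exact List.isChain_cons_cons.2 ⟨hyx.symm, chain'_rotate_of_closed C1 C2 y hch hclosed⟩

end Ore

section Ore2
variable {V : Type} [Fintype V] [DecidableEq V] {G : SimpleGraph V} [DecidableRel G.Adj]


/-- helper: value at the index of z -/
lemma getElem_of_indexOf {V : Type} [DecidableEq V] (l : List V) (z : V) (i : ℕ)
    (hi : i < l.length) (h : l.idxOf z = i) : l[i] = z := by
  subst h
  simpa using List.idxOf_get hi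

/-- Pigeonhole: crossing index for the rotation argument. -/
lemma exists_crossing (l : List V) (hnd : l.Nodup) (k : ℕ) (hlen : l.length = k + 1)
    (hne : l ≠ [])
    (huw : ¬ G.Adj (l.head hne) (l.getLast hne))
    (hNu : ∀ z, G.Adj (l.head hne) z → z ∈ l)
    (hNw : ∀ z, G.Adj (l.getLast hne) z → z ∈ l)
    (hsum : k + 1 ≤ G.degree (l.head hne) + G.degree (l.getLast hne)) :
    ∃ i : ℕ, ∃ h : i + 1 < l.length,
      G.Adj (l.head hne) (l[i+1]'h) ∧ G.Adj (l.getLast hne) (l[i]'(by omega)) := by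
  set u := l.head hne with hu
  set w := l.getLast hne with hw
  have hidx : ∀ z ∈ l, l.idxOf z < l.length := fun z hz => List.idxOf_lt_length_iff.2 hz
  have hgetu : l[0]'(by omega) = u := (List.head_eq_getElem_zero hne).symm
  have hgetw : l[k]'(by omega) = w := by
    rw [hw, List.getLast_eq_getElem]
    congr 1
    omega
  have hAsub : ∀ z ∈ G.neighborFinset u, l.idxOf z - 1 ∈ Finset.range k ∧ 1 ≤ l.idxOf z := by
    intro z hz
    simp only [mem_neighborFinset] at hz
    have hzl : z ∈ l := hNu z hz
    have h1 : l.idxOf z < k + 1 := hlen ▸ hidx z hzl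
    have h0 : l.idxOf z ≠ 0 := by
      intro h
      have : l[0]'(by omega) = z := getElem_of_indexOf l z 0 (by omega) h
      rw [hgetu] at this
      exact G.irrefl (this ▸ hz)
    exact ⟨Finset.mem_range.2 (by omega), by omega⟩
  have hBsub : ∀ z ∈ G.neighborFinset w, l.idxOf z ∈ Finset.range k := by
    intro z hz
    simp only [mem_neighborFinset] at hz
    have hzl : z ∈ l := hNw z hz
    have h1 : l.idxOf z < k + 1 := hlen ▸ hidx z hzl
    have hk : l.idxOf z ≠ k := by
      intro h
      have : l[k]'(by omega) = z := getElem_of_indexOf l z k (by omega) h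
      rw [hgetw] at this
      exact G.irrefl (this ▸ hz)
    exact Finset.mem_range.2 (by omega)
  set A := (G.neighborFinset u).image (fun z => l.idxOf z - 1) with hA
  set B := (G.neighborFinset w).image (fun z => l.idxOf z) with hB
  have hcardA : A.card = G.degree u := by
    rw [hA, Finset.card_image_of_injOn, ← card_neighborFinset_eq_degree]
    intro z1 h1 z2 h2 he
    have e1 := (hAsub z1 h1).2
    have e2 := (hAsub z2 h2).2
    have he' : l.idxOf z1 - 1 = l.idxOf z2 - 1 := he
    simp only [Finset.mem_coe, mem_neighborFinset] at h1 h2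
    have : l.idxOf z1 = l.idxOf z2 := by omega
    exact (List.idxOf_inj (hNu _ h1)).1 this
  have hcardB : B.card = G.degree w := by
    rw [hB, Finset.card_image_of_injOn, ← card_neighborFinset_eq_degree]
    intro z1 h1 z2 h2 he
    have he' : l.idxOf z1 = l.idxOf z2 := he
    simp only [Finset.mem_coe, mem_neighborFinset] at h1 h2
    exact (List.idxOf_inj (hNw _ h1)).1 he'
  have hAr : A ⊆ Finset.range k := by
    intro i hi
    rw [hA, Finset.mem_image] at hi
    obtain ⟨z, hz, rfl⟩ := hi
    exact (hAsub z hz).1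
  have hBr : B ⊆ Finset.range k := by
    intro i hi
    rw [hB, Finset.mem_image] at hi
    obtain ⟨z, hz, rfl⟩ := hi
    exact hBsub z hz
  have hinter : (A ∩ B).Nonempty := by
    rw [← Finset.card_pos]
    have hun : (A ∪ B).card ≤ k := le_trans (Finset.card_le_card (Finset.union_subset hAr hBr))
      (by simp)
    have := Finset.card_union_add_card_inter A B
    omega
  obtain ⟨i, hi⟩ := hinter
  rw [Finset.mem_inter] at hi
  obtain ⟨hiA, hiB⟩ := hi
  rw [hA, Finset.mem_image] at hiA
  obtain ⟨z1, hz1, hz1e⟩ := hiA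
  rw [hB, Finset.mem_image] at hiB
  obtain ⟨z2, hz2, hz2e⟩ := hiB
  have h1 := hAsub z1 hz1
  have hz1i : l.idxOf z1 = i + 1 := by omega
  simp only [mem_neighborFinset] at hz1 hz2
  have hi1 : i + 1 < l.length := by
    rw [← hz1i]
    exact hidx z1 (hNu _ hz1)
  refine ⟨i, hi1, ?_, ?_⟩
  · rw [getElem_of_indexOf l z1 (i+1) hi1 hz1i]; exact hz1
  · rw [getElem_of_indexOf l z2 i (by omega) (by omega)]; exact hz2

end Ore2

section Ore3
variable {V : Type} [Fintype V] [DecidableEq V] {G : SimpleGraph V} [DecidableRel G.Adj]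

lemma getElem_congr' {α : Type} {l : List α} {i j : ℕ} (h : i = j) {hi : i < l.length} :
    l[i]'hi = l[j]'(h ▸ hi) := by subst h; rfl

lemma path_extend
    (hOre : ∀ u v : V, u ≠ v → ¬G.Adj u v → Fintype.card V ≤ G.degree u + G.degree v + 1)
    (l : List V) (hne : l ≠ []) (hnd : l.Nodup) (hch : l.Chain' G.Adj)
    (hlt : l.length < Fintype.card V) :
    ∃ l' : List V, l' ≠ [] ∧ l'.Nodup ∧ l'.Chain' G.Adj ∧ l'.length = l.length + 1 := by
  classical
  set u := l.head hne with hu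
  set w := l.getLast hne with hw
  by_cases hxu : ∃ x, x ∉ l ∧ G.Adj u x
  · obtain ⟨x, hxl, hadj⟩ := hxu
    refine ⟨x :: l, by simp, List.nodup_cons.2 ⟨hxl, hnd⟩, ?_, by simp⟩
    refine List.isChain_cons.2 ⟨?_, hch⟩
    intro y hy
    rw [List.head?_eq_head hne, Option.mem_some_iff] at hy
    subst hy
    exact hadj.symm
  by_cases hxw : ∃ x, x ∉ l ∧ G.Adj w x
  · obtain ⟨x, hxl, hadj⟩ := hxw
    refine ⟨l ++ [x], by simp, ?_, ?_, by simp⟩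
    · rw [List.nodup_append]
      exact ⟨hnd, List.nodup_singleton x, fun a ha b hb h => hxl (by rw [List.mem_singleton] at hb; rw [← hb, ← h]; exact ha)⟩
    · refine List.isChain_append.2 ⟨hch, List.isChain_singleton x, ?_⟩
      intro a ha b hb
      rw [List.getLast?_eq_getLast_of_ne_nil hne, Option.mem_some_iff] at ha
      simp only [List.head?_cons, Option.mem_some_iff] at hb
      subst ha; subst hb
      exact hadj
  push_neg at hxu hxw
  have hNu : ∀ z, G.Adj u z → z ∈ l := by
    intro z hz
    by_contra h
    exact hxu z h hz
  have hNw : ∀ z, G.Adj w z → z ∈ l := by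
    intro z hz
    by_contra h
    exact hxw z h hz
  -- length 1 case: contradiction
  rcases Nat.lt_or_ge l.length 2 with hlen1 | hlen2
  · -- l = [u], degree u = 0, contradiction with Ore
    exfalso
    have hl1 : l.length = 1 := by
      have := List.length_pos_iff.2 hne
      omega
    have hlu : l = [u] := by
      cases l with
      | nil => exact absurd rfl hne
      | cons a t =>
        simp at hl1
        subst hl1
        rfl
    -- pick x outside
    have hsub : l.toFinset ⊂ Finset.univ := by
      refine Finset.ssubset_univ_iff.2 ?_
      intro h
      have := Finset.card_univ (α := V)
      rw [← h, List.card_toFinset, hnd.dedup] at this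
      omega
    obtain ⟨x, -, hx⟩ := Finset.exists_of_ssubset hsub
    rw [List.mem_toFinset] at hx
    have hxune : x ≠ u := fun h => hx (by rw [hlu, h]; simp)
    have hnadj : ¬G.Adj x u := fun h => hx (hNu x h.symm)
    have hdu : G.degree u = 0 := by
      rw [← card_neighborFinset_eq_degree, Finset.card_eq_zero]
      ext z
      simp only [mem_neighborFinset, Finset.notMem_empty, iff_false]
      intro hz
      have := hNu z hz
      rw [hlu] at this
      simp at this
      exact G.irrefl (this ▸ hz)
    have hdx : G.degree x ≤ Fintype.card V - 2 := by
      have : G.neighborFinset x ⊆ (Finset.univ.erase x).erase u := by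
        intro z hz
        simp only [mem_neighborFinset] at hz
        refine Finset.mem_erase.2 ⟨?_, Finset.mem_erase.2 ⟨fun h => G.irrefl (h ▸ hz), Finset.mem_univ _⟩⟩
        intro h
        exact hnadj (h ▸ hz)
      calc G.degree x = (G.neighborFinset x).card := rfl
        _ ≤ ((Finset.univ.erase x).erase u).card := Finset.card_le_card this
        _ ≤ Fintype.card V - 2 := by
            rw [Finset.card_erase_of_mem (Finset.mem_erase.2 ⟨(Ne.symm hxune), Finset.mem_univ _⟩),
              Finset.card_erase_of_mem (Finset.mem_univ _), Finset.card_univ]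
            omega
    have := hOre x u hxune hnadj
    have hN2 : 2 ≤ Fintype.card V := by omega
    omega
  -- length ≥ 2
  have huw : u ≠ w := by
    intro h
    have h0 : (0 : ℕ) < l.length := by omega
    have h1 : l.length - 1 < l.length := by omega
    have e0 : l[0]'h0 = u := (List.head_eq_getElem_zero hne).symm
    have e1 : l[l.length - 1]'h1 = w := by rw [hw, List.getLast_eq_getElem]
    have : (0 : ℕ) = l.length - 1 := by
      have := (List.Nodup.getElem_inj_iff hnd (i := 0) (j := l.length - 1) (hi := h0) (hj := h1))
      apply this.1
      rw [e0, e1, h]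
    omega
  by_cases hadjuw : G.Adj u w
  · -- l itself is a cycle
    obtain ⟨l', h1, h2, h3, h4⟩ := cycle_extend hOre l hne hnd hch (by exact hadjuw.symm) hlt
    exact ⟨l', h1, h2, h3, h4⟩
  · -- rotation case
    have hk : ∃ k, l.length = k + 1 := ⟨l.length - 1, by omega⟩
    obtain ⟨k, hlk⟩ := hk
    have hsum : k + 1 ≤ G.degree u + G.degree w := by
      have := hOre u w huw hadjuw
      omega
    obtain ⟨i, hi1, hadj1, hadj2⟩ := exists_crossing l hnd k hlk hne hadjuw hNu hNw hsum
    set A' := l.take (i + 1) with hA'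
    set B' := l.drop (i + 1) with hB'
    have hA'len : A'.length = i + 1 := by rw [hA', List.length_take]; omega
    have hB'len : B'.length = l.length - (i + 1) := by rw [hB', List.length_drop]
    have hA'ne : A' ≠ [] := by
      intro h; rw [h] at hA'len; simp at hA'len
    have hB'ne : B' ≠ [] := by
      intro h; rw [h] at hB'len; simp at hB'len; omega
    have hsplit : A' ++ B' = l := List.take_append_drop _ _
    have hCne : A' ++ B'.reverse ≠ [] := by simp [hA'ne]
    have hperm : (A' ++ B'.reverse).Perm l := by
      rw [← hsplit]
      exact List.Perm.append_left A' (List.reverse_perm B')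
    have hCnd : (A' ++ B'.reverse).Nodup := hperm.nodup_iff.2 hnd
    have hClen : (A' ++ B'.reverse).length = l.length := hperm.length_eq
    -- values
    have hA'last : A'.getLast hA'ne = l[i]'(by omega) := by
      rw [List.getLast_eq_getElem, getElem_congr' (show A'.length - 1 = i by omega)]
      simp only [hA']
      rw [List.getElem_take]
    have hA'head : A'.head hA'ne = u := by
      rw [List.head_eq_getElem_zero, hu, List.head_eq_getElem_zero hne]
      simp only [hA']
      rw [List.getElem_take]
    have hB'head : B'.head hB'ne = l[i+1]'hi1 := by
      rw [List.head_eq_getElem_zero]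
      simp only [hB']
      rw [List.getElem_drop]
    have hB'last : B'.getLast hB'ne = w := by
      rw [List.getLast_eq_getElem]
      simp only [hB']
      rw [List.getElem_drop,
        getElem_congr' (show i + 1 + ((l.drop (i+1)).length - 1) = l.length - 1 by
          rw [List.length_drop]; omega)]
      rw [hw, List.getLast_eq_getElem]
    -- chain of C
    have hChC : (A' ++ B'.reverse).Chain' G.Adj := by
      refine List.isChain_append.2 ⟨hch.prefix (List.take_prefix _ _), ?_, ?_⟩
      · rw [List.isChain_reverse]
        exact (hch.drop (i+1)).imp (fun a b h => h.symm)
      · intro a ha b hb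
        rw [List.getLast?_eq_getLast_of_ne_nil hA'ne, Option.mem_some_iff] at ha
        rw [List.head?_eq_head (by simpa using hB'ne), Option.mem_some_iff] at hb
        subst ha; subst hb
        rw [hA'last, List.head_reverse, hB'last]
        exact hadj2.symm
    -- closed
    have hClast : (A' ++ B'.reverse).getLast hCne = l[i+1]'hi1 := by
      rw [List.getLast_append_of_ne_nil _ (by simpa using hB'ne), List.getLast_reverse, hB'head]
    have hChead : (A' ++ B'.reverse).head hCne = u := by
      rw [List.head_append_of_ne_nil hA'ne, hA'head]
    have hclosed : G.Adj ((A' ++ B'.reverse).getLast hCne) ((A' ++ B'.reverse).head hCne) := by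
      rw [hClast, hChead]
      exact hadj1.symm
    obtain ⟨l', h1, h2, h3, h4⟩ := cycle_extend hOre (A' ++ B'.reverse) hCne hCnd hChC hclosed (by omega)
    exact ⟨l', h1, h2, h3, by omega⟩

end Ore3

section Final
variable {V : Type} [Fintype V] [DecidableEq V] {G : SimpleGraph V} [DecidableRel G.Adj]

lemma ore_traceable [Nonempty V]
    (hOre : ∀ u v : V, u ≠ v → ¬G.Adj u v → Fintype.card V ≤ G.degree u + G.degree v + 1) :
    ∃ (u w : V) (p : G.Walk u w), p.IsHamiltonian := by
  have key : ∀ m (l : List V), l ≠ [] → l.Nodup → l.Chain' G.Adj →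
      l.length + m = Fintype.card V →
      ∃ l' : List V, l' ≠ [] ∧ l'.Nodup ∧ l'.Chain' G.Adj ∧ l'.length = Fintype.card V := by
    intro m
    induction m with
    | zero => intro l h1 h2 h3 h4; exact ⟨l, h1, h2, h3, by omega⟩
    | succ m ih =>
      intro l h1 h2 h3 h4
      obtain ⟨l', a, b, c, d⟩ := path_extend hOre l h1 h2 h3 (by omega)
      exact ih l' a b c (by omega)
  obtain ⟨v⟩ := ‹Nonempty V›
  have hpos : 1 ≤ Fintype.card V := Fintype.card_pos
  obtain ⟨l, h1, h2, h3, h4⟩ := key (Fintype.card V - 1) [v] (by simp) (by simp) (List.isChain_singleton v)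
    (by simp; omega)
  obtain ⟨u, w, p, hp⟩ := walk_of_chain l h1 h3
  refine ⟨u, w, p, ?_⟩
  intro a
  rw [hp]
  have huniv : l.toFinset = Finset.univ := by
    apply Finset.eq_univ_of_card
    rw [List.card_toFinset, h2.dedup, h4]
  have hmem : a ∈ l := by
    rw [← List.mem_toFinset, huniv]
    exact Finset.mem_univ a
  exact List.count_eq_one_of_mem h2 hmem

end Final

/-- The degree multiset of a finite simple graph. -/
def degreeMultiset {V : Type} [Fintype V] [DecidableEq V] (G : SimpleGraph V) [DecidableRel G.Adj] :
    Multiset ℕ :=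
  Finset.univ.val.map fun v => G.degree v

theorem stmt_7 (n : ℕ) {V : Type} [Fintype V] [DecidableEq V] (G : SimpleGraph V) [DecidableRel G.Adj]
    (hcard : Fintype.card V = 2 * n - 1)
    (hdeg : degreeMultiset G =
      Multiset.replicate n (n - 1) + Multiset.replicate (n - 1) n)
    (hnotiso : IsEmpty (G ≃g completeBipartiteGraph (Fin n) (Fin (n - 1)))) :
    ∃ (u w : V) (p : G.Walk u w), p.IsHamiltonian := by
  rcases Nat.eq_zero_or_pos n with hn | hn
  · -- n = 0 : V empty, G is isomorphic to the empty complete bipartite graph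
    subst hn
    exfalso
    have hVempty : IsEmpty V := Fintype.card_eq_zero_iff.1 (by omega)
    haveI : IsEmpty (Fin (0 - 1)) := ⟨fun x => absurd x.2 (by omega)⟩
    exact hnotiso.false
      ⟨Equiv.equivOfIsEmpty V _, fun {a b} => isEmptyElim a⟩
  · have hNe : Nonempty V := by
      rw [← Fintype.card_pos_iff]
      omega
    have hdegv : ∀ v : V, n - 1 ≤ G.degree v := by
      intro v
      have hv : G.degree v ∈ degreeMultiset G :=
        Multiset.mem_map_of_mem _ (Finset.mem_univ v)
      rw [hdeg, Multiset.mem_add] at hv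
      rcases hv with hv | hv
      · rw [Multiset.eq_of_mem_replicate hv]
      · rw [Multiset.eq_of_mem_replicate hv]; omega
    apply ore_traceable
    intro u v huv hnadj
    have h1 := hdegv u
    have h2 := hdegv v
    omega
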